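/- Let n ≥ 1, let k_1 > k_2 > ⋯ > k_{n−1} > k_n = 0 be integers, let ν_1,…,ν_n be nonnegative integers satisfying ν_i ≤ k_i − k_{i+1} − 1 for all 1 ≤ i ≤ n−1, and let c ∈ ℂ. Set λ' = (c + k_1, c + k_2, …, c + k_n) ∈ ℂ^n. Then there exist complex numbers w_1,…,w_{n+1} such that, defining P(x_1,…,x_n) = ∑_{j=1}^{n+1} w_j · h_j(x_1,…,x_n), the following hold: (i) P(λ') = P(λ' − (ν_i + 1)·e_i) for every 1 ≤ i ≤ n; and (ii) P(λ') ≠ P(λ' − s·e_i) for every 1 ≤ i ≤ n and every integer s with 1 ≤ s ≤ ν_i, where e_1,…,e_n are the standard basis vectors of ℂ^n. -/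

import Mathlib

/-- Evaluation of the complete homogeneous symmetric polynomial of degree `p`
at a point `x ∈ ℂ^n`. -/
noncomputable def hval (n : ℕ) (x : Fin n → ℂ) (p : ℕ) : ℂ :=
  ∑ d ∈ Finset.Nat.antidiagonalTuple n p, ∏ i, x i ^ d i

open Finset PowerSeries


lemma hval_zero (n : ℕ) (x : Fin n → ℂ) : hval n x 0 = 1 := by
  simp [hval, Finset.Nat.antidiagonalTuple_zero_right]

lemma hval_zero_vars (q : ℕ) (x : Fin 0 → ℂ) : hval 0 x q = if q = 0 then 1 else 0 := by
  cases q with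
  | zero => simp [hval_zero]
  | succ q => simp [hval, Finset.Nat.antidiagonalTuple_zero_succ]

lemma hval_cons (N q : ℕ) (u : ℂ) (z : Fin N → ℂ) :
    hval (N+1) (Fin.cons u z) q
      = ∑ ab ∈ Finset.HasAntidiagonal.antidiagonal q, u ^ ab.1 * hval N z ab.2 := by
  unfold hval
  simp_rw [Finset.mul_sum, Finset.sum_sigma']
  refine Finset.sum_nbij' (fun d => ⟨(d 0, ∑ i, Fin.tail d i), Fin.tail d⟩)
    (fun p => Fin.cons p.1.1 p.2) ?_ ?_ ?_ ?_ ?_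
  · intro d hd
    rw [Finset.Nat.mem_antidiagonalTuple] at hd
    refine Finset.mem_sigma.2 ⟨?_, ?_⟩
    · rw [Finset.HasAntidiagonal.mem_antidiagonal, ← hd, Fin.sum_univ_succ]
      rfl
    · rw [Finset.Nat.mem_antidiagonalTuple]
  · intro p hp
    rw [Finset.mem_sigma, Finset.HasAntidiagonal.mem_antidiagonal, Finset.Nat.mem_antidiagonalTuple] at hp
    rw [Finset.Nat.mem_antidiagonalTuple, Fin.sum_univ_succ]
    simp only [Fin.cons_zero, Fin.cons_succ]
    rw [hp.2, hp.1]
  · intro d _; exact Fin.cons_self_tail d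
  · intro p hp
    rw [Finset.mem_sigma, Finset.HasAntidiagonal.mem_antidiagonal, Finset.Nat.mem_antidiagonalTuple] at hp
    ext : 1
    · simp only [Fin.cons_zero, Fin.tail_cons]
      rw [hp.2]
    · simp [Fin.tail_cons]
  · intro d _
    rw [Fin.prod_univ_succ, Fin.cons_zero]
    simp only [Fin.cons_succ]
    rfl

lemma hval_comp_perm (N q : ℕ) (z : Fin N → ℂ) (σ : Equiv.Perm (Fin N)) :
    hval N (z ∘ σ) q = hval N z q := by
  unfold hval
  refine Finset.sum_nbij' (fun d => d ∘ σ.symm) (fun d => d ∘ σ) ?_ ?_ ?_ ?_ ?_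
  · intro d hd
    rw [Finset.Nat.mem_antidiagonalTuple] at hd ⊢
    rw [← hd]
    exact Equiv.sum_comp σ.symm d
  · intro d hd
    rw [Finset.Nat.mem_antidiagonalTuple] at hd ⊢
    rw [← hd]
    exact Equiv.sum_comp σ d
  · intro d _; funext i; simp
  · intro d _; funext i; simp
  · intro d _
    calc ∏ i, (z ∘ σ) i ^ d i
        = ∏ i, (fun j => z j ^ (d ∘ σ.symm) j) (σ i) :=
          Finset.prod_congr rfl fun i _ => by simp
      _ = ∏ i, z i ^ (d ∘ σ.symm) i := by exact Equiv.prod_comp σ (fun j => z j ^ (d ∘ σ.symm) j)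

lemma hval_snoc (N q : ℕ) (z : Fin N → ℂ) (u : ℂ) :
    hval (N+1) (Fin.snoc z u) q
      = ∑ ab ∈ Finset.HasAntidiagonal.antidiagonal q, u ^ ab.1 * hval N z ab.2 := by
  rw [Fin.snoc_eq_cons_rotate]
  exact (hval_comp_perm (N+1) q (Fin.cons u z) (finRotate (N+1))).trans
    (hval_cons N q u z)

lemma hval_snoc_rec (N q : ℕ) (z : Fin N → ℂ) (u : ℂ) :
    hval (N+1) (Fin.snoc z u) (q+1)
      = hval N z (q+1) + u * hval (N+1) (Fin.snoc z u) q := by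
  rw [hval_snoc, hval_snoc, Finset.Nat.antidiagonal_succ, Finset.sum_cons, Finset.sum_map]
  simp only [pow_zero, one_mul, Finset.mul_sum]
  refine congrArg _ (Finset.sum_congr rfl fun ab _ => ?_)
  simp [pow_succ]
  ring

lemma coeff_one_sub_C_mul (a : ℂ) (T : PowerSeries ℂ) (m : ℕ) :
    PowerSeries.coeff (m+1) ((1 - PowerSeries.C a * PowerSeries.X) * T)
      = PowerSeries.coeff (m+1) T - a * PowerSeries.coeff m T := by
  rw [sub_mul, one_mul, map_sub, mul_assoc, PowerSeries.coeff_C_mul,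
    PowerSeries.coeff_succ_X_mul]

lemma coeff_zero_one_sub_C_mul (a : ℂ) (T : PowerSeries ℂ) :
    PowerSeries.coeff 0 ((1 - PowerSeries.C a * PowerSeries.X) * T)
      = PowerSeries.coeff 0 T := by
  rw [sub_mul, one_mul, map_sub, mul_assoc, PowerSeries.coeff_C_mul,
    PowerSeries.coeff_zero_X_mul, mul_zero, sub_zero]

lemma geom_inv (t : ℂ) :
    (1 - PowerSeries.C t * PowerSeries.X) * PowerSeries.mk (fun p => t ^ p) = 1 := by
  ext q
  cases q with
  | zero => simp [coeff_zero_one_sub_C_mul]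
  | succ q =>
    rw [coeff_one_sub_C_mul, PowerSeries.coeff_mk, PowerSeries.coeff_mk,
      PowerSeries.coeff_one]
    simp [pow_succ]
    ring

lemma prod_geom_inv (N : ℕ) (z : Fin N → ℂ) :
    (∏ i, (1 - PowerSeries.C (z i) * PowerSeries.X)) * PowerSeries.mk (hval N z) = 1 := by
  induction N with
  | zero =>
    have : PowerSeries.mk (hval 0 z) = 1 := by
      ext q
      rw [PowerSeries.coeff_mk, PowerSeries.coeff_one, hval_zero_vars]
    simp [this]
  | succ N ih =>
    cases z using Fin.consCases with | _ z0 zt =>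
    have hmk : PowerSeries.mk (hval (N+1) (Fin.cons z0 zt))
        = PowerSeries.mk (fun p => z0 ^ p) * PowerSeries.mk (hval N zt) := by
      ext q
      rw [PowerSeries.coeff_mk, PowerSeries.coeff_mul, hval_cons]
      exact Finset.sum_congr rfl fun ab _ => by rw [PowerSeries.coeff_mk, PowerSeries.coeff_mk]
    rw [Fin.prod_univ_succ, hmk]
    simp only [Fin.cons_zero, Fin.cons_succ]
    calc (1 - PowerSeries.C z0 * PowerSeries.X) *
          (∏ i : Fin N, (1 - PowerSeries.C (zt i) * PowerSeries.X)) *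
          (PowerSeries.mk (fun p => z0 ^ p) * PowerSeries.mk (hval N zt))
        = ((1 - PowerSeries.C z0 * PowerSeries.X) * PowerSeries.mk (fun p => z0 ^ p)) *
          ((∏ i : Fin N, (1 - PowerSeries.C (zt i) * PowerSeries.X)) *
            PowerSeries.mk (hval N zt)) := by ring
      _ = 1 := by rw [geom_inv, ih, one_mul]

lemma coeff_prod_mul_geom (N : ℕ) (y : Fin N → ℂ) (t : ℂ) (q : ℕ) :
    PowerSeries.coeff (N + q)
        ((∏ i, (1 - PowerSeries.C (y i) * PowerSeries.X)) * PowerSeries.mk (fun p => t ^ p))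
      = t ^ q * ∏ i, (t - y i) := by
  induction N generalizing q with
  | zero => simp
  | succ N ih =>
    cases y using Fin.consCases with | _ y0 yt =>
    rw [Fin.prod_univ_succ]
    simp only [Fin.cons_zero, Fin.cons_succ]
    rw [mul_assoc]
    have hN : N + 1 + q = (N + q) + 1 := by omega
    rw [hN, coeff_one_sub_C_mul]
    have h1 : N + q + 1 = N + (q + 1) := by omega
    rw [h1, ih yt (q+1), ih yt q, Fin.prod_univ_succ]
    simp only [Fin.cons_zero, Fin.cons_succ]
    ring

lemma key_sum (n : ℕ) (x g : Fin n → ℂ) (t : ℂ) :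
    ∑ j : Fin (n+1),
        (PowerSeries.coeff (n - (j:ℕ))
          ((∏ i, (1 - PowerSeries.C (x i) * PowerSeries.X)) *
            ∏ i, (1 - PowerSeries.C (g i) * PowerSeries.X)))
          * hval (n+1) (Fin.snoc x t) (j:ℕ)
      = ∏ i, (t - g i) := by
  set Ap : PowerSeries ℂ := ∏ i, (1 - PowerSeries.C (x i) * PowerSeries.X) with hAp
  set Gp : PowerSeries ℂ := ∏ i, (1 - PowerSeries.C (g i) * PowerSeries.X) with hGp
  set Hμ : PowerSeries ℂ := PowerSeries.mk (hval (n+1) (Fin.snoc x t)) with hHμ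
  have hsplit : (∏ i : Fin (n+1), (1 - PowerSeries.C ((Fin.snoc x t : Fin (n+1) → ℂ) i) * PowerSeries.X))
      = Ap * (1 - PowerSeries.C t * PowerSeries.X) := by
    rw [Fin.prod_univ_castSucc, hAp]
    simp [Fin.snoc_castSucc, Fin.snoc_last]
  have h1 : Ap * (1 - PowerSeries.C t * PowerSeries.X) * Hμ = 1 := by
    rw [← hsplit, hHμ]; exact prod_geom_inv (n+1) (Fin.snoc x t)
  have hmu : Ap * Hμ = PowerSeries.mk (fun p => t ^ p) := by
    calc Ap * Hμ = Ap * Hμ * ((1 - PowerSeries.C t * PowerSeries.X) *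
          PowerSeries.mk (fun p => t ^ p)) := by rw [geom_inv t, mul_one]
      _ = (Ap * (1 - PowerSeries.C t * PowerSeries.X) * Hμ) *
          PowerSeries.mk (fun p => t ^ p) := by ring
      _ = PowerSeries.mk (fun p => t ^ p) := by rw [h1, one_mul]
  have h2 : PowerSeries.coeff n ((Ap * Gp) * Hμ) = ∏ i, (t - g i) := by
    have : (Ap * Gp) * Hμ = Gp * (Ap * Hμ) := by ring
    rw [this, hmu]
    have := coeff_prod_mul_geom n g t 0
    simpa using this
  rw [← h2, PowerSeries.coeff_mul, Finset.Nat.sum_antidiagonal_eq_sum_range_succ_mk,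
    ← Finset.sum_range_reflect]
  rw [Fin.sum_univ_eq_sum_range
    (fun j => (PowerSeries.coeff (n - j)) (Ap * Gp) * hval (n+1) (Fin.snoc x t) j) (n+1)]
  refine Finset.sum_congr rfl fun r hr => ?_
  rw [Finset.mem_range] at hr
  have e1 : n + 1 - 1 - r = n - r := by omega
  have e2 : n - (n - r) = r := by omega
  rw [e1, e2, PowerSeries.coeff_mk]

lemma hval_update (n : ℕ) (x : Fin n → ℂ) (i : Fin n) (t' : ℂ) (q : ℕ) :
    hval n x (q+1) - hval n (Function.update x i t') (q+1)
      = (x i - t') * hval (n+1) (Fin.snoc x t') q := by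
  have hperm : Fin.snoc (Function.update x i t') (x i)
      = (Fin.snoc x t' : Fin (n+1) → ℂ) ∘ (Equiv.swap (Fin.castSucc i) (Fin.last n)) := by
    funext j
    rcases eq_or_ne j (Fin.castSucc i) with rfl | hji
    · simp only [Function.comp_apply, Equiv.swap_apply_left, Fin.snoc_last,
        Fin.snoc_castSucc, Function.update_self]
    · rcases eq_or_ne j (Fin.last n) with rfl | hjl
      · simp only [Function.comp_apply, Equiv.swap_apply_right, Fin.snoc_last,
          Fin.snoc_castSucc]
      · obtain ⟨j', rfl⟩ := Fin.exists_castSucc_eq.2 hjl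
        have hj'i : j' ≠ i := fun h => hji (by rw [h])
        simp only [Function.comp_apply, Equiv.swap_apply_of_ne_of_ne hji hjl,
          Fin.snoc_castSucc, Function.update_of_ne hj'i]
  have e3 : ∀ r, hval (n+1) (Fin.snoc (Function.update x i t') (x i)) r
      = hval (n+1) (Fin.snoc x t') r := by
    intro r
    rw [hperm]
    exact hval_comp_perm (n+1) r (Fin.snoc x t') (Equiv.swap (Fin.castSucc i) (Fin.last n))
  have e1 := hval_snoc_rec n q x t'
  have e2 := hval_snoc_rec n q (Function.update x i t') (x i)
  rw [e3, e3] at e2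
  linear_combination e2 - e1

/-- Given integers `k_1 > ⋯ > k_{n-1} > k_n = 0`, nonnegative integers
`ν_i ≤ k_i - k_{i+1} - 1` (for `i < n`), and `c ∈ ℂ`, set `λ'_i = c + k_i`. Then there
exist `w_1, …, w_{n+1} ∈ ℂ` such that `P(x) = ∑_{j=1}^{n+1} w_j h_j(x)` satisfies
`P(λ') = P(λ' - (ν_i+1) e_i)` for all `i`, and `P(λ') ≠ P(λ' - s e_i)` for all `i` and
all `1 ≤ s ≤ ν_i`. -/
theorem stmt14 (n : ℕ) (hn : 1 ≤ n) (k : Fin n → ℤ) (hk : StrictAnti k)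
    (hklast : k ⟨n - 1, by omega⟩ = 0)
    (ν : Fin n → ℕ)
    (hν : ∀ (i : Fin n) (h : (i : ℕ) + 1 < n),
      (ν i : ℤ) ≤ k i - k ⟨(i : ℕ) + 1, h⟩ - 1)
    (c : ℂ) :
    ∃ w : Fin (n + 1) → ℂ,
      (∀ i : Fin n,
        (∑ j : Fin (n + 1), w j * hval n (fun i' => c + (k i' : ℂ)) ((j : ℕ) + 1)) =
          ∑ j : Fin (n + 1),
            w j * hval n
              (Function.update (fun i' => c + (k i' : ℂ)) i (c + (k i : ℂ) - ((ν i : ℕ) + 1)))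
              ((j : ℕ) + 1)) ∧
      (∀ i : Fin n, ∀ s : ℕ, 1 ≤ s → s ≤ ν i →
        (∑ j : Fin (n + 1), w j * hval n (fun i' => c + (k i' : ℂ)) ((j : ℕ) + 1)) ≠
          ∑ j : Fin (n + 1),
            w j * hval n
              (Function.update (fun i' => c + (k i' : ℂ)) i (c + (k i : ℂ) - (s : ℕ)))
              ((j : ℕ) + 1)) := by
  set x : Fin n → ℂ := fun i' => c + (k i' : ℂ) with hxdef
  set m : Fin n → ℤ := fun i => k i - (ν i : ℤ) - 1 with hmdef
  set F : PowerSeries ℂ := (∏ i, (1 - PowerSeries.C (x i) * PowerSeries.X)) *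
      ∏ i, (1 - PowerSeries.C (c + (m i : ℂ)) * PowerSeries.X) with hF
  have key : ∀ (i : Fin n) (t' : ℂ),
      (∑ j : Fin (n+1), (PowerSeries.coeff (n - (j:ℕ)) F) * hval n x ((j:ℕ)+1))
        - (∑ j : Fin (n+1), (PowerSeries.coeff (n - (j:ℕ)) F)
            * hval n (Function.update x i t') ((j:ℕ)+1))
      = (x i - t') * ∏ i', (t' - (c + (m i' : ℂ))) := by
    intro i t'
    rw [← Finset.sum_sub_distrib]
    have hterm : ∀ j : Fin (n+1),
        (PowerSeries.coeff (n - (j:ℕ)) F) * hval n x ((j:ℕ)+1)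
          - (PowerSeries.coeff (n - (j:ℕ)) F) * hval n (Function.update x i t') ((j:ℕ)+1)
        = (x i - t') * ((PowerSeries.coeff (n - (j:ℕ)) F)
            * hval (n+1) (Fin.snoc x t') (j:ℕ)) := by
      intro j
      rw [← mul_sub, hval_update n x i t' (j:ℕ)]
      ring
    rw [Finset.sum_congr rfl (fun j _ => hterm j), ← Finset.mul_sum, hF,
      key_sum n x (fun i' => c + (m i' : ℂ)) t']
  refine ⟨fun j => PowerSeries.coeff (n - (j:ℕ)) F, ?_, ?_⟩
  · intro i
    have hkey := key i (c + (k i : ℂ) - ((ν i : ℕ) + 1))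
    have h0 : (∏ i', ((c + (k i : ℂ) - ((ν i : ℕ) + 1)) - (c + (m i' : ℂ)))) = 0 := by
      apply Finset.prod_eq_zero (Finset.mem_univ i)
      have hmi : (m i : ℂ) = (k i : ℂ) - (ν i : ℂ) - 1 := by
        rw [hmdef]; push_cast; ring
      rw [hmi]; push_cast; ring
    rw [h0, mul_zero] at hkey
    exact sub_eq_zero.mp hkey
  · intro i s hs1 hs2 heq
    have hkey := key i (c + (k i : ℂ) - (s : ℕ))
    rw [heq, sub_self] at hkey
    have hxs : x i - (c + (k i : ℂ) - (s : ℕ)) = (s : ℂ) := by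
      rw [hxdef]; push_cast; ring
    rw [hxs] at hkey
    have hs0 : (s : ℂ) ≠ 0 := Nat.cast_ne_zero.mpr (by omega)
    have hfac : ∀ j : Fin n, (c + (k i : ℂ) - (s : ℕ)) - (c + (m j : ℂ)) ≠ 0 := by
      intro j
      have hcast : (c + (k i : ℂ) - (s : ℕ)) - (c + (m j : ℂ))
          = ((k i - (s : ℤ) - m j : ℤ) : ℂ) := by
        push_cast; ring
      rw [hcast, Ne, Int.cast_eq_zero]
      have hmj : m j = k j - (ν j : ℤ) - 1 := by rw [hmdef]
      rcases lt_trichotomy j i with hj | hj | hj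
      · have h1 : (j : ℕ) + 1 < n := by
          have := i.isLt
          have hj' : (j : ℕ) < (i : ℕ) := hj
          omega
        have h2 := hν j h1
        have h3 : k i ≤ k ⟨(j : ℕ) + 1, h1⟩ := by
          apply hk.antitone
          have hj' : (j : ℕ) < (i : ℕ) := hj
          exact Fin.mk_le_of_le_val (by omega)
        omega
      · rw [hj] at hmj ⊢
        omega
      · have h1 : (i : ℕ) + 1 < n := by
          have := j.isLt
          have hj' : (i : ℕ) < (j : ℕ) := hj
          omega
        have h2 := hν i h1
        have h3 : k j ≤ k ⟨(i : ℕ) + 1, h1⟩ := by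
          apply hk.antitone
          have hj' : (i : ℕ) < (j : ℕ) := hj
          exact Fin.mk_le_of_le_val (by omega)
        omega
    have hprod : (∏ j, ((c + (k i : ℂ) - (s : ℕ)) - (c + (m j : ℂ)))) ≠ 0 :=
      Finset.prod_ne_zero_iff.mpr fun j _ => hfac j
    exact (mul_ne_zero hs0 hprod) hkey.symm
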